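/- arXiv:2203.09436 — 4 statements merged into one kernel-verified Lean document; each statement's English description precedes it below -/
import Mathlib

section
/- Let (e_k)_{k≥1} be the estimation errors e_k = E[‖F̃(u_k) − F(u_k)‖²] of a sequence of estimators satisfying, for each k ≥ 1, the recursive bound e_k ≤ p_k σ²/S₁⁽ᵏ⁾ + (1 − p_k)( e_{k-1} + E[L²‖u_k − u_{k-1}‖²/S₂⁽ᵏ⁾] ) (with the convention that the k = 1 inequality reads e_1 ≤ p_1 σ²/S₁⁽¹⁾ since p_1 = 1). Fix ε > 0 and suppose p_k = 2/(k+1), S₁⁽ᵏ⁾ ≥ ⌈8σ²/(p_k ε²)⌉, and S₂⁽ᵏ⁾ ≥ ⌈8L²‖u_k − u_{k-1}‖²/(p_k² ε²)⌉ almost surely (so that E[L²‖u_k − u_{k-1}‖²/S₂⁽ᵏ⁾] ≤ p_k² ε²/8). Then E[‖F̃(u_k) − F(u_k)‖²] ≤ ε²/k for all k ≥ 1. -/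
open MeasureTheory

/-- Under the recursive PAGE variance bound, the parameter choices
`p_k = 2/(k+1)`, `S₁⁽ᵏ⁾ ≥ ⌈8σ²/(p_k ε²)⌉` and `S₂⁽ᵏ⁾ ≥ ⌈8L²‖u_k − u_{k-1}‖²/(p_k² ε²)⌉` (a.s.)
yield `E[‖F̃(u_k) − F(u_k)‖²] ≤ ε²/k` for all `k ≥ 1`. -/
theorem page_variance_decay
    {d : ℕ} {Ω : Type*} [MeasureSpace Ω] [IsProbabilityMeasure (volume : Measure Ω)]
    (F : EuclideanSpace ℝ (Fin d) → EuclideanSpace ℝ (Fin d))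
    (u Ft : ℕ → Ω → EuclideanSpace ℝ (Fin d))
    (σ L ε : ℝ) (hσ : 0 < σ) (hL : 0 < L) (hε : 0 < ε)
    (S1 : ℕ → ℕ) (S2 : ℕ → Ω → ℕ)
    (hS1pos : ∀ k, 1 ≤ S1 k) (hS2pos : ∀ k ω, 1 ≤ S2 k ω)
    (e : ℕ → ℝ)
    (he : ∀ k, e k = ∫ ω, ‖Ft k ω - F (u k ω)‖ ^ 2)
    (hint : ∀ k, Integrable (fun ω => ‖Ft k ω - F (u k ω)‖ ^ 2))
    (hint2 : ∀ k, 1 ≤ k →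
      Integrable (fun ω => L ^ 2 * ‖u k ω - u (k - 1) ω‖ ^ 2 / (S2 k ω : ℝ)))
    (hrec1 : e 1 ≤ (2 / ((1 : ℝ) + 1)) * σ ^ 2 / S1 1)
    (hrec : ∀ k : ℕ, 2 ≤ k →
      e k ≤ (2 / ((k : ℝ) + 1)) * σ ^ 2 / S1 k
        + (1 - 2 / ((k : ℝ) + 1)) *
            (e (k - 1) + ∫ ω, L ^ 2 * ‖u k ω - u (k - 1) ω‖ ^ 2 / (S2 k ω : ℝ)))
    (hS1 : ∀ k : ℕ, 1 ≤ k →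
      (⌈8 * σ ^ 2 / ((2 / ((k : ℝ) + 1)) * ε ^ 2)⌉₊ : ℕ) ≤ S1 k)
    (hS2 : ∀ k : ℕ, 1 ≤ k → ∀ᵐ ω,
      (⌈8 * L ^ 2 * ‖u k ω - u (k - 1) ω‖ ^ 2 / ((2 / ((k : ℝ) + 1)) ^ 2 * ε ^ 2)⌉₊ : ℕ)
        ≤ S2 k ω)
    (hS2exp : ∀ k : ℕ, 1 ≤ k →
      (∫ ω, L ^ 2 * ‖u k ω - u (k - 1) ω‖ ^ 2 / (S2 k ω : ℝ))
        ≤ (2 / ((k : ℝ) + 1)) ^ 2 * ε ^ 2 / 8) :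
    ∀ k : ℕ, 1 ≤ k → e k ≤ ε ^ 2 / k := by
  have hp : ∀ k : ℕ, 1 ≤ k → (2 / ((k:ℝ)+1)) * σ^2 / S1 k ≤ (2/((k:ℝ)+1))^2 * ε^2 / 8 := by
    intro k hk
    have hK : (1:ℝ) ≤ (k:ℝ) := by exact_mod_cast hk
    have hp0 : 0 < 2/((k:ℝ)+1) := by positivity
    have hc : 8 * σ^2 / ((2/((k:ℝ)+1)) * ε^2) ≤ (S1 k : ℝ) := by
      calc 8 * σ^2 / ((2/((k:ℝ)+1)) * ε^2)
          ≤ (⌈8*σ^2 / ((2/((k:ℝ)+1)) * ε^2)⌉₊ : ℝ) := Nat.le_ceil _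
        _ ≤ S1 k := by exact_mod_cast hS1 k hk
    have hS1k : 0 < (S1 k : ℝ) := by exact_mod_cast hS1pos k
    have hc' : 8 * σ^2 ≤ (S1 k : ℝ) * ((2/((k:ℝ)+1)) * ε^2) := by
      rw [div_le_iff₀ (by positivity)] at hc; linarith
    rw [div_le_div_iff₀ hS1k (by norm_num)]
    nlinarith [mul_le_mul_of_nonneg_left hc' hp0.le]
  intro k hk
  induction k, hk using Nat.le_induction with
  | base =>
      have h1 := hp 1 le_rfl
      norm_num at h1 hrec1 ⊢
      nlinarith [sq_nonneg ε, hrec1]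
  | succ k hk ih =>
      have hK : (1:ℝ) ≤ (k:ℝ) := by exact_mod_cast hk
      have hK0 : (0:ℝ) < (k:ℝ) := by linarith
      have hrec' := hrec (k+1) (by omega)
      simp only [Nat.add_sub_cancel] at hrec'
      push_cast at hrec'
      set p : ℝ := 2/((k:ℝ)+1+1) with hpdef
      have hp0 : 0 < p := by positivity
      have hp1 : p ≤ 1 := by
        rw [hpdef, div_le_one (by linarith)]; linarith
      have hA : p * σ^2 / S1 (k+1) ≤ p^2*ε^2/8 := by
        have := hp (k+1) (by omega)
        push_cast at this
        convert this using 3 <;> ring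
      have hI := hS2exp (k+1) (by omega)
      simp only [Nat.add_sub_cancel] at hI
      push_cast at hI
      have hI' : (∫ ω, L ^ 2 * ‖u (k+1) ω - u k ω‖ ^ 2 / (S2 (k+1) ω : ℝ))
          ≤ p^2*ε^2/8 := by
        convert hI using 3 <;> ring
      have key : e (k+1) ≤ p^2*ε^2/8 + (1-p)*(ε^2/k + p^2*ε^2/8) := by
        calc e (k+1) ≤ p * σ^2 / S1 (k+1)
              + (1-p) * (e k + ∫ ω, L ^ 2 * ‖u (k+1) ω - u k ω‖ ^ 2 / (S2 (k+1) ω : ℝ)) := hrec'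
          _ ≤ p^2*ε^2/8 + (1-p)*(ε^2/k + p^2*ε^2/8) := by
              have h1 : (0:ℝ) ≤ 1 - p := by linarith
              have h2 : e k + (∫ ω, L ^ 2 * ‖u (k+1) ω - u k ω‖ ^ 2 / (S2 (k+1) ω : ℝ))
                  ≤ ε^2/k + p^2*ε^2/8 := add_le_add ih hI'
              nlinarith [mul_le_mul_of_nonneg_left h2 h1]
      have hfin : p^2*ε^2/8 + (1-p)*(ε^2/k + p^2*ε^2/8) ≤ ε^2/((k:ℝ)+1) := by
        have hk0 : (k:ℝ) ≠ 0 := by positivity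
        have h1 : ((k:ℝ)+1) ≠ 0 := by positivity
        have h2 : ((k:ℝ)+1+1) ≠ 0 := by positivity
        have heq : ε^2/((k:ℝ)+1) - (p^2*ε^2/8 + (1-p)*(ε^2/k + p^2*ε^2/8))
            = ε^2*(2*(k:ℝ)+3)/(((k:ℝ)+1)*((k:ℝ)+1+1)^3) := by
          rw [hpdef]; field_simp; ring
        have hpos : (0:ℝ) ≤ ε^2*(2*(k:ℝ)+3)/(((k:ℝ)+1)*((k:ℝ)+1+1)^3) := by positivity
        linarith
      push_cast
      linarith
end

section
/- Let F : ℝ^d → ℝ^d be (1/L)-cocoercive. Let (A_k)_{k≥1} and (B_k)_{k≥1} be positive non-decreasing real sequences satisfying, for all k ≥ 2, B_{k-1}/A_k = B_k/(A_k + B_k) and 1 − 2B_k/(A_k + B_k) = A_{k-1}/A_k. Fix u_0, and for k ≥ 1 let u_k = λ_k u_0 + (1 − λ_k)(u_{k-1} − (1/L) g_{k-1}), where λ_k = B_k/(A_k + B_k) and g_{k-1} ∈ ℝ^d is an arbitrary vector (an estimate of F(u_{k-1})). Define C_k = (A_k/(2L))‖F(u_k)‖² + B_k⟨F(u_k), u_k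 − u_0⟩. Then for every k ≥ 2, C_k − C_{k-1} ≤ (A_k/(2L))‖F(u_{k-1}) − g_{k-1}‖² + ((A_k − A_{k-1})/(2L)) ⟨F(u_{k-1}), F(u_{k-1}) − g_{k-1}⟩. -/
set_option maxHeartbeats 1600000


open scoped RealInnerProductSpace

/-- One-step potential decrease bound for the Halpern iteration with an
inexact operator value, in the `(1/L)`-cocoercive case: with
`C_k = (A_k/(2L))‖F(u_k)‖² + B_k⟪F(u_k), u_k − u_0⟫`, for all `k ≥ 2`,
`C_k − C_{k-1} ≤ (A_k/(2L))‖F(u_{k-1}) − g_{k-1}‖² + ((A_k − A_{k-1})/(2L))⟪F(u_{k-1}), F(u_{k-1}) − g_{k-1}⟫`. -/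
theorem halpern_potential_one_step_cocoercive
    {d : ℕ} (L : ℝ) (hL : 0 < L)
    (F : EuclideanSpace ℝ (Fin d) → EuclideanSpace ℝ (Fin d))
    (hcoco : ∀ u v, (1 / L) * ‖F u - F v‖ ^ 2 ≤ ⟪F u - F v, u - v⟫)
    (A B : ℕ → ℝ)
    (hApos : ∀ k, 1 ≤ k → 0 < A k) (hBpos : ∀ k, 1 ≤ k → 0 < B k)
    (hAmono : ∀ k, 1 ≤ k → A k ≤ A (k + 1)) (hBmono : ∀ k, 1 ≤ k → B k ≤ B (k + 1))
    (hAB1 : ∀ k, 2 ≤ k → B (k - 1) / A k = B k / (A k + B k))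
    (hAB2 : ∀ k, 2 ≤ k → 1 - 2 * B k / (A k + B k) = A (k - 1) / A k)
    (g : ℕ → EuclideanSpace ℝ (Fin d)) (u : ℕ → EuclideanSpace ℝ (Fin d))
    (hrec : ∀ k, 1 ≤ k →
      u k = (B k / (A k + B k)) • u 0
        + (1 - B k / (A k + B k)) • (u (k - 1) - (1 / L) • g (k - 1)))
    (C : ℕ → ℝ)
    (hC : ∀ k, C k = (A k / (2 * L)) * ‖F (u k)‖ ^ 2 + B k * ⟪F (u k), u k - u 0⟫) :
    ∀ k, 2 ≤ k →
      C k - C (k - 1) ≤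
        (A k / (2 * L)) * ‖F (u (k - 1)) - g (k - 1)‖ ^ 2 +
          ((A k - A (k - 1)) / (2 * L)) * ⟪F (u (k - 1)), F (u (k - 1)) - g (k - 1)⟫ := by
  
  intro k hk
  set n := k - 1 with hn
  have hn1 : 1 ≤ n := by omega
  have ha : 0 < A k := hApos k (by omega)
  have ha' : 0 < A n := hApos n hn1
  have hb : 0 < B k := hBpos k (by omega)
  have hab : 0 < A k + B k := by linarith
  set lam := B k / (A k + B k) with hlam
  have h1 : B n = A k * lam := by
    have h := hAB1 k hk
    rw [div_eq_iff ha.ne'] at h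
    rw [hn, hlam]
    linear_combination h
  have h2 : 2 * A k * lam = A k - A n := by
    have h := hAB2 k hk
    field_simp [ha.ne', hab.ne'] at h
    rw [hlam, hn]
    field_simp [hab.ne']
    linarith [h]
  have h3 : B k * (1 - lam) = A k * lam := by
    rw [hlam]
    field_simp
    ring
  have hu : u k = lam • u 0 + (1 - lam) • (u n - (1 / L) • g n) := hrec k (by omega)
  set x := F (u k) with hx
  set y := F (u n) with hy
  set gg := g n with hgg
  set w := u n - u 0 with hw
  have huk0 : u k - u 0 = (1 - lam) • w - ((1 - lam) / L) • gg := by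
    rw [hu, hw]; module
  have hukn : u k - u n = (-lam) • w - ((1 - lam) / L) • gg := by
    rw [hu, hw]; module
  have hc : (1 / L) * ‖x - y‖ ^ 2 ≤ ⟪x - y, u k - u n⟫ := hcoco (u k) (u n)
  rw [hukn] at hc
  have hnxy : ‖x - y‖ ^ 2 = ⟪x, x⟫ - 2 * ⟪x, y⟫ + ⟪y, y⟫ := by
    rw [← real_inner_self_eq_norm_sq]
    simp only [inner_sub_left, inner_sub_right]
    rw [real_inner_comm y x]; ring
  have hexp : ⟪x - y, (-lam) • w - ((1 - lam) / L) • gg⟫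
      = -lam * (⟪x, w⟫ - ⟪y, w⟫) - ((1 - lam) / L) * (⟪x, gg⟫ - ⟪y, gg⟫) := by
    simp only [inner_sub_left, inner_sub_right, real_inner_smul_right]
    ring
  rw [hexp, hnxy] at hc
  -- scaled cocoercivity inequality
  have hcS' : (A k / L) * (⟪x, x⟫ - 2 * ⟪x, y⟫ + ⟪y, y⟫)
      + ((A k - A n) / 2) * (⟪x, w⟫ - ⟪y, w⟫)
      + ((A k + A n) / (2 * L)) * (⟪x, gg⟫ - ⟪y, gg⟫) ≤ 0 := by
    have h := mul_le_mul_of_nonneg_left hc ha.le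
    have e1 : A k * (-lam * (⟪x, w⟫ - ⟪y, w⟫) - ((1 - lam) / L) * (⟪x, gg⟫ - ⟪y, gg⟫))
        = -((A k - A n) / 2) * (⟪x, w⟫ - ⟪y, w⟫)
          - ((A k + A n) / (2 * L)) * (⟪x, gg⟫ - ⟪y, gg⟫) := by
      linear_combination (-(⟪x, w⟫ - ⟪y, w⟫) / 2 + (⟪x, gg⟫ - ⟪y, gg⟫) / (2 * L)) * h2
    rw [e1] at h
    have e0 : A k * (1 / L * (⟪x, x⟫ - 2 * ⟪x, y⟫ + ⟪y, y⟫))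
        = (A k / L) * (⟪x, x⟫ - 2 * ⟪x, y⟫ + ⟪y, y⟫) := by ring
    rw [e0] at h
    linarith [h]
  have key : 0 ≤ ⟪x, x⟫ + 4 * ⟪y, y⟫ + ⟪gg, gg⟫ - 4 * ⟪x, y⟫ + 2 * ⟪x, gg⟫ - 4 * ⟪y, gg⟫ := by
    have h0 : (0:ℝ) ≤ ⟪x - (2:ℝ) • y + gg, x - (2:ℝ) • y + gg⟫ := real_inner_self_nonneg
    have hexp2 : ⟪x - (2:ℝ) • y + gg, x - (2:ℝ) • y + gg⟫
        = ⟪x, x⟫ + 4 * ⟪y, y⟫ + ⟪gg, gg⟫ - 4 * ⟪x, y⟫ + 2 * ⟪x, gg⟫ - 4 * ⟪y, gg⟫ := by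
      simp only [inner_sub_left, inner_sub_right, inner_add_left, inner_add_right,
        real_inner_smul_left, real_inner_smul_right]
      rw [real_inner_comm y x, real_inner_comm gg x, real_inner_comm gg y]; ring
    linarith [h0, hexp2.symm.le]
  -- rewrite goal into scalar form
  rw [hC k, hC n, huk0]
  have e2 : ⟪x, (1 - lam) • w - ((1 - lam) / L) • gg⟫
      = (1 - lam) * ⟪x, w⟫ - ((1 - lam) / L) * ⟪x, gg⟫ := by
    simp only [inner_sub_right, real_inner_smul_right]
  have e3 : ‖x‖ ^ 2 = ⟪x, x⟫ := (real_inner_self_eq_norm_sq x).symm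
  have e4 : ‖y - gg‖ ^ 2 = ⟪y, y⟫ - 2 * ⟪y, gg⟫ + ⟪gg, gg⟫ := by
    rw [← real_inner_self_eq_norm_sq]
    simp only [inner_sub_left, inner_sub_right]
    rw [real_inner_comm gg y]; ring
  have e5 : ⟪y, y - gg⟫ = ⟪y, y⟫ - ⟪y, gg⟫ := by simp only [inner_sub_right]
  have e6 : ‖y‖ ^ 2 = ⟪y, y⟫ := (real_inner_self_eq_norm_sq y).symm
  rw [e2, e3, e4, e5, e6, ← hw]
  have h4 : B k * (1 - lam) = (A k - A n) / 2 := by rw [h3]; linarith [h2]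
  have h5 : B n = (A k - A n) / 2 := by rw [h1]; linarith [h2]
  have e7 : B k * ((1 - lam) * ⟪x, w⟫ - ((1 - lam) / L) * ⟪x, gg⟫)
      = ((A k - A n) / 2) * ⟪x, w⟫ - ((A k - A n) / (2 * L)) * ⟪x, gg⟫ := by
    linear_combination (⟪x, w⟫ - ⟪x, gg⟫ / L) * h4
  rw [e7, h5]
  have hKnn : 0 ≤ (A k / (2 * L)) *
      (⟪x, x⟫ + 4 * ⟪y, y⟫ + ⟪gg, gg⟫ - 4 * ⟪x, y⟫ + 2 * ⟪x, gg⟫ - 4 * ⟪y, gg⟫) := by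
    apply mul_nonneg _ key
    positivity
  rw [show F (u n) = y from rfl]
  have eq : (A k / (2*L) * ⟪x, x⟫ + ((A k - A n)/2 * ⟪x, w⟫ - (A k - A n)/(2*L) * ⟪x, gg⟫)
      - (A n/(2*L) * ⟪y, y⟫ + (A k - A n)/2 * ⟪y, w⟫))
      - (A k/(2*L) * (⟪y, y⟫ - 2*⟪y, gg⟫ + ⟪gg, gg⟫) + (A k - A n)/(2*L) * (⟪y, y⟫ - ⟪y, gg⟫))
      = (A k / L * (⟪x, x⟫ - 2*⟪x, y⟫ + ⟪y, y⟫) + (A k - A n)/2 * (⟪x, w⟫ - ⟪y, w⟫)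
          + (A k + A n)/(2*L) * (⟪x, gg⟫ - ⟪y, gg⟫))
        - A k/(2*L) * (⟪x, x⟫ + 4*⟪y, y⟫ + ⟪gg, gg⟫ - 4*⟪x, y⟫ + 2*⟪x, gg⟫ - 4*⟪y, gg⟫) := by ring
  linarith [hcS', hKnn, eq]
end

section
/- Let U ⊆ ℝ^d be nonempty, closed, and convex, with metric projection Π_U, and let F : ℝ^d → ℝ^d be (1/L)-cocoercive. For η ≥ L define the operator mapping G_η(u) = η(u − Π_U(u − F(u)/η)). Then G_η is (3/(4η))-cocoercive: for all u, v ∈ ℝ^d, ⟨G_η(u) − G_η(v), u − v⟩ ≥ (3/(4η)) ‖G_η(u) − G_η(v)‖². -/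
open scoped RealInnerProductSpace

/-- Variational inequality for the metric projection onto a convex set. -/
lemma proj_var_ineq {d : ℕ} (U : Set (EuclideanSpace ℝ (Fin d)))
    (hUne : U.Nonempty) (hUconv : Convex ℝ U)
    (proj : EuclideanSpace ℝ (Fin d) → EuclideanSpace ℝ (Fin d))
    (hproj : ∀ x, proj x ∈ U ∧ ∀ y ∈ U, ‖x - proj x‖ ≤ ‖x - y‖)
    (x : EuclideanSpace ℝ (Fin d)) :
    ∀ z ∈ U, ⟪x - proj x, z - proj x⟫ ≤ 0 := by
  haveI : Nonempty U := hUne.to_subtype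
  have hinf : ‖x - proj x‖ = ⨅ w : U, ‖x - w‖ := by
    apply le_antisymm
    · exact le_ciInf fun w => (hproj x).2 w w.2
    · exact ciInf_le ⟨0, by rintro _ ⟨w, rfl⟩; positivity⟩
        (⟨proj x, (hproj x).1⟩ : U)
  exact (norm_eq_iInf_iff_real_inner_le_zero hUconv (hproj x).1).mp hinf

/-- Abstract algebraic core of the cocoercivity estimate. -/
lemma key_alg {E : Type*} [NormedAddCommGroup E] [InnerProductSpace ℝ E]
    (w g f : E) (c : ℝ) (hc0 : 0 < c)
    (hfirm : ‖w - g‖ ^ 2 ≤ ⟪w - g, w - c • f⟫)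
    (hco : c * ‖f‖ ^ 2 ≤ ⟪w, f⟫) :
    (3 / 4) * ‖g‖ ^ 2 ≤ ⟪g, w⟫ := by
  have e1 : ⟪w - g, w - c • f⟫
      = ‖w‖ ^ 2 - c * ⟪w, f⟫ - ⟪g, w⟫ + c * ⟪g, f⟫ := by
    rw [inner_sub_left, inner_sub_right, inner_sub_right, real_inner_smul_right,
      real_inner_smul_right, real_inner_self_eq_norm_sq]
    ring
  have e2 : ‖w - g‖ ^ 2 = ‖w‖ ^ 2 - 2 * ⟪g, w⟫ + ‖g‖ ^ 2 := by
    rw [norm_sub_sq_real, real_inner_comm w g]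
  rw [e1, e2] at hfirm
  have hcs : ⟪g, f⟫ ≤ ‖g‖ * ‖f‖ := real_inner_le_norm g f
  nlinarith [sq_nonneg (‖g‖ - 2 * c * ‖f‖), mul_le_mul_of_nonneg_left hcs hc0.le,
    mul_le_mul_of_nonneg_left hco hc0.le]

/-- If `F` is `(1/L)`-cocoercive and `η ≥ L`, the operator mapping
`G_η(u) = η (u − Π_U(u − F(u)/η))` associated with the metric projection `Π_U` onto a nonempty
closed convex set `U` is `(3/(4η))`-cocoercive. -/
theorem operator_mapping_cocoercive
    {d : ℕ} (U : Set (EuclideanSpace ℝ (Fin d)))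
    (hUne : U.Nonempty) (hUclosed : IsClosed U) (hUconv : Convex ℝ U)
    (proj : EuclideanSpace ℝ (Fin d) → EuclideanSpace ℝ (Fin d))
    (hproj : ∀ x, proj x ∈ U ∧ ∀ y ∈ U, ‖x - proj x‖ ≤ ‖x - y‖)
    (L : ℝ) (hL : 0 < L)
    (F : EuclideanSpace ℝ (Fin d) → EuclideanSpace ℝ (Fin d))
    (hcoco : ∀ u v, (1 / L) * ‖F u - F v‖ ^ 2 ≤ ⟪F u - F v, u - v⟫)
    (η : ℝ) (hη : L ≤ η) :
    ∀ u v,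
      (3 / (4 * η)) * ‖(η • (u - proj (u - (1 / η) • F u))) - (η • (v - proj (v - (1 / η) • F v)))‖ ^ 2
        ≤ ⟪(η • (u - proj (u - (1 / η) • F u))) - (η • (v - proj (v - (1 / η) • F v))), u - v⟫ := by
  intro u v
  have hη0 : (0:ℝ) < η := lt_of_lt_of_le hL hη
  obtain ⟨x, hxdef⟩ : ∃ x, x = u - (1 / η) • F u := ⟨_, rfl⟩
  obtain ⟨y, hydef⟩ : ∃ y, y = v - (1 / η) • F v := ⟨_, rfl⟩
  obtain ⟨p, hpdef⟩ : ∃ p, p = proj x := ⟨_, rfl⟩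
  obtain ⟨q, hqdef⟩ : ∃ q, q = proj y := ⟨_, rfl⟩
  -- firm nonexpansiveness of the projection
  have h1 := proj_var_ineq U hUne hUconv proj hproj x q (by rw [hqdef]; exact (hproj y).1)
  have h2 := proj_var_ineq U hUne hUconv proj hproj y p (by rw [hpdef]; exact (hproj x).1)
  rw [← hpdef] at h1
  rw [← hqdef] at h2
  have hfirm : ‖p - q‖ ^ 2 ≤ ⟪p - q, x - y⟫ := by
    have hneg : ⟪y - q, p - q⟫ = - ⟪y - q, q - p⟫ := by
      rw [← inner_neg_right]; congr 1; abel
    rw [hneg] at h2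
    have hsum : ⟪(x - p) - (y - q), q - p⟫ ≤ 0 := by
      rw [inner_sub_left]; linarith
    have hexp : ⟪(x - p) - (y - q), q - p⟫
        = ‖p - q‖ ^ 2 - ⟪p - q, x - y⟫ := by
      have e1 : (x - p) - (y - q) = (x - y) - (p - q) := by abel
      have e2 : q - p = -(p - q) := by abel
      rw [e1, e2, inner_neg_right, inner_sub_left, real_inner_comm (x - y) (p - q),
        real_inner_self_eq_norm_sq]
      ring
    linarith [hexp ▸ hsum]
  -- apply the abstract lemma with w = u - v, g, f, c = 1/η
  have hc0 : (0:ℝ) < 1 / η := by positivity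
  have hfirm' : ‖(u - v) - ((u - p) - (v - q))‖ ^ 2
      ≤ ⟪(u - v) - ((u - p) - (v - q)), (u - v) - (1 / η) • (F u - F v)⟫ := by
    have e1 : (u - v) - ((u - p) - (v - q)) = p - q := by abel
    have e2 : (u - v) - (1 / η) • (F u - F v) = x - y := by
      rw [hxdef, hydef, smul_sub]; abel
    rw [e1, e2]; exact hfirm
  have hco : (1 / η) * ‖F u - F v‖ ^ 2 ≤ ⟪u - v, F u - F v⟫ := by
    have h := hcoco u v
    rw [real_inner_comm]
    have h1L : (1:ℝ)/η ≤ 1/L := by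
      apply div_le_div_of_nonneg_left (by norm_num) hL hη
    nlinarith [sq_nonneg ‖F u - F v‖]
  have hkey := key_alg (u - v) ((u - p) - (v - q)) (F u - F v) (1/η) hc0 hfirm' hco
  -- conclude
  have hGg : (η • (u - proj (u - (1 / η) • F u))) - (η • (v - proj (v - (1 / η) • F v)))
      = η • ((u - p) - (v - q)) := by
    rw [hpdef, hqdef, hxdef, hydef]
    module
  rw [hGg, real_inner_smul_left, norm_smul, Real.norm_eq_abs, abs_of_pos hη0, mul_pow]
  have heq : 3 / (4 * η) * (η ^ 2 * ‖(u - p) - (v - q)‖ ^ 2)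
      = η * ((3/4) * ‖(u - p) - (v - q)‖ ^ 2) := by
    field_simp
  rw [heq]
  exact mul_le_mul_of_nonneg_left hkey hη0.le
end

section
/- Let F : ℝ^d → ℝ^d be monotone and L-Lipschitz, let θ > 0 and M = 3L²(2 + θ). Let λ_k ∈ [0,1), η_k > 0, and positive parameters A_k, B_k, c_k satisfy B_{k+1} = B_k/(1 − λ_k), A_k = B_k η_k/(2λ_k), η_{k+1} = ((1 − λ_k² − Mη_k²) λ_{k+1} η_k)/((1 − Mη_k²)(1 − λ_k) λ_k) > 0, Mη_k² + λ_k² < 1, and η_{k+1} ≤ λ_{k+1}(1 − λ_k)/(M λ_k η_k). Fix u_0 and arbitrary vectors g_{k-1}, g_k ∈ ℝ^d (estimates of F(v_{k-1}), F(v_k)), and define v_k = λ_k u_0 + (1 − λ_k) u_k − η_k g_{k-1} and u_{k+1} = λ_k u_0 + (1 − λ_k) u_k − η_k g_k. With V_k = A_k‖F(u_k)‖² + B_k⟨F(u_k), u_k − u_0⟩ + c_k L²‖u_k − v_{k-1}‖², one has V_{k+1} − V_k ≤ −L²(θ A_k/(M η_k²) − c_{k+1}) ‖u_{k+1} − v_k‖²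 − L²(c_k − A_k) ‖u_k − v_{k-1}‖² + (2A_k/(M η_k²)) ‖F(v_k) − g_k‖² + A_k ‖F(v_{k-1}) − g_{k-1}‖². -/
open scoped RealInnerProductSpace

set_option maxHeartbeats 1600000 in
/-- One-step potential bound for the extrapolated (two-step) Halpern iteration
with a monotone `L`-Lipschitz operator and inexact operator values, using the potential
`V_k = A_k‖F(u_k)‖² + B_k⟪F(u_k), u_k − u_0⟫ + c_k L²‖u_k − v_{k-1}‖²`. -/
theorem extrapolated_halpern_potential_one_step
    {d : ℕ} (L θ M : ℝ) (hL : 0 < L) (hθ : 0 < θ) (hM : M = 3 * L ^ 2 * (2 + θ))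
    (F : EuclideanSpace ℝ (Fin d) → EuclideanSpace ℝ (Fin d))
    (hmono : ∀ u v, 0 ≤ ⟪F u - F v, u - v⟫)
    (hlip : ∀ u v, ‖F u - F v‖ ≤ L * ‖u - v‖)
    (lamk lamk1 etak etak1 Ak Ak1 Bk Bk1 ck ck1 : ℝ)
    (hlamk : 0 ≤ lamk) (hlamk' : lamk < 1)
    (hlamk1 : 0 ≤ lamk1) (hlamk1' : lamk1 < 1)
    (hetak : 0 < etak) (hetak1 : 0 < etak1)
    (hAk : 0 < Ak) (hAk1 : 0 < Ak1) (hBk : 0 < Bk) (hBk1 : 0 < Bk1)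
    (hck : 0 < ck) (hck1 : 0 < ck1)
    (hB : Bk1 = Bk / (1 - lamk))
    (hA : Ak = Bk * etak / (2 * lamk))
    (hA1 : Ak1 = Bk1 * etak1 / (2 * lamk1))
    (heta : etak1 = ((1 - lamk ^ 2 - M * etak ^ 2) * lamk1 * etak) /
        ((1 - M * etak ^ 2) * (1 - lamk) * lamk))
    (hsmall : M * etak ^ 2 + lamk ^ 2 < 1)
    (hetale : etak1 ≤ lamk1 * (1 - lamk) / (M * lamk * etak))
    (u0 uk vkm1 gkm1 gk vk uk1 : EuclideanSpace ℝ (Fin d))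
    (hvk : vk = lamk • u0 + (1 - lamk) • uk - etak • gkm1)
    (huk1 : uk1 = lamk • u0 + (1 - lamk) • uk - etak • gk) :
    (Ak1 * ‖F uk1‖ ^ 2 + Bk1 * ⟪F uk1, uk1 - u0⟫ + ck1 * L ^ 2 * ‖uk1 - vk‖ ^ 2)
        - (Ak * ‖F uk‖ ^ 2 + Bk * ⟪F uk, uk - u0⟫ + ck * L ^ 2 * ‖uk - vkm1‖ ^ 2)
      ≤ - (L ^ 2 * (θ * Ak / (M * etak ^ 2) - ck1)) * ‖uk1 - vk‖ ^ 2
        - (L ^ 2 * (ck - Ak)) * ‖uk - vkm1‖ ^ 2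
        + (2 * Ak / (M * etak ^ 2)) * ‖F vk - gk‖ ^ 2
        + Ak * ‖F vkm1 - gkm1‖ ^ 2 := by
  subst hM
  -- basic positivity facts
  have hlamne : lamk ≠ 0 := by
    intro h
    rw [h] at hA
    norm_num at hA
    exact hAk.ne' hA
  have hlamk0 : 0 < lamk := lt_of_le_of_ne hlamk (Ne.symm hlamne)
  have hlam1ne : lamk1 ≠ 0 := by
    intro h
    rw [h] at hA1
    norm_num at hA1
    exact hAk1.ne' hA1
  have h1l : 0 < 1 - lamk := by linarith
  have h2θ : 0 < 2 + θ := by linarith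
  have hm0 : 0 < 3 * L ^ 2 * (2 + θ) * etak ^ 2 := by
    apply mul_pos (mul_pos (by positivity) h2θ) (pow_pos hetak 2)
  have hm1 : 3 * L ^ 2 * (2 + θ) * etak ^ 2 < 1 := by nlinarith [sq_nonneg lamk]
  have h1m : 0 < 1 - 3 * L ^ 2 * (2 + θ) * etak ^ 2 := by linarith
  have h1lne : (1 : ℝ) - lamk ≠ 0 := ne_of_gt h1l
  have h1mne : (1 : ℝ) - 3 * L ^ 2 * (2 + θ) * etak ^ 2 ≠ 0 := ne_of_gt h1m
  have hetne : etak ≠ 0 := ne_of_gt hetak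
  have hLne : L ≠ 0 := ne_of_gt hL
  have h2θne : (2 : ℝ) + θ ≠ 0 := ne_of_gt h2θ
  set a := F uk1 with ha
  set b := F uk with hb
  set f := F vk with hf
  set fm := F vkm1 with hfm
  have Hmono : (0 : ℝ) ≤ ⟪a - b, uk1 - uk⟫ := by rw [ha, hb]; exact hmono uk1 uk
  have Hlip1 : ‖a - f‖ ^ 2 ≤ L ^ 2 * ‖uk1 - vk‖ ^ 2 := by
    have h := hlip uk1 vk
    rw [← ha, ← hf] at h
    calc ‖a - f‖ ^ 2 ≤ (L * ‖uk1 - vk‖) ^ 2 := pow_le_pow_left₀ (norm_nonneg _) h 2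
      _ = L ^ 2 * ‖uk1 - vk‖ ^ 2 := by ring
  have Hlip2 : ‖b - fm‖ ^ 2 ≤ L ^ 2 * ‖uk - vkm1‖ ^ 2 := by
    have h := hlip uk vkm1
    rw [← hb, ← hfm] at h
    calc ‖b - fm‖ ^ 2 ≤ (L * ‖uk - vkm1‖) ^ 2 := pow_le_pow_left₀ (norm_nonneg _) h 2
      _ = L ^ 2 * ‖uk - vkm1‖ ^ 2 := by ring
  have keyI :
      ((- (L ^ 2 * (θ * Ak / (3 * L ^ 2 * (2 + θ) * etak ^ 2) - ck1)) * ‖uk1 - vk‖ ^ 2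
        - (L ^ 2 * (ck - Ak)) * ‖uk - vkm1‖ ^ 2
        + (2 * Ak / (3 * L ^ 2 * (2 + θ) * etak ^ 2)) * ‖f - gk‖ ^ 2
        + Ak * ‖fm - gkm1‖ ^ 2)
      - ((Ak1 * ‖a‖ ^ 2 + Bk1 * ⟪a, uk1 - u0⟫ + ck1 * L ^ 2 * ‖uk1 - vk‖ ^ 2)
        - (Ak * ‖b‖ ^ 2 + Bk * ⟪b, uk - u0⟫ + ck * L ^ 2 * ‖uk - vkm1‖ ^ 2)))
      - ((Bk / lamk) * ⟪a - b, uk1 - uk⟫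
        + (2 * Ak / (3 * L ^ 2 * (2 + θ) * etak ^ 2)) *
            (L ^ 2 * ‖uk1 - vk‖ ^ 2 - ‖a - f‖ ^ 2)
        + Ak * (L ^ 2 * ‖uk - vkm1‖ ^ 2 - ‖b - fm‖ ^ 2)
        + (Ak / 2) * ‖b - (2 : ℝ) • fm + gkm1‖ ^ 2
        + (Ak / 6) * ‖(3 : ℝ) • b - (2 : ℝ) • gk - gkm1‖ ^ 2)
      = (2 * Ak / (3 * L ^ 2 * (2 + θ) * etak ^ 2)) * ‖a - f‖ ^ 2
        + (2 * Ak / (3 * L ^ 2 * (2 + θ) * etak ^ 2)) * ‖f - gk‖ ^ 2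
        + (Ak * lamk / (1 - lamk)) * ‖gk‖ ^ 2
        - (Ak1 - Ak / (1 - lamk)) * ‖a‖ ^ 2
        - (Ak / (1 - lamk)) * ‖a - gk‖ ^ 2 := by
    rw [hB, hA, hvk, huk1]
    simp only [← real_inner_self_eq_norm_sq]
    simp only [inner_sub_left, inner_sub_right, inner_add_left, inner_add_right,
      real_inner_smul_left, real_inner_smul_right]
    simp only [real_inner_comm b a, real_inner_comm f a, real_inner_comm fm a, real_inner_comm gk a, real_inner_comm gkm1 a, real_inner_comm u0 a, real_inner_comm uk a, real_inner_comm vkm1 a, real_inner_comm f b, real_inner_comm fm b, real_inner_comm gk b, real_inner_comm gkm1 b, real_inner_comm u0 b, real_inner_comm uk b, real_inner_comm vkm1 b, real_inner_comm fm f, real_inner_comm gk f, real_inner_comm gkm1 f, real_inner_comm u0 f, real_inner_comm uk f, real_inner_comm vkm1 f, real_inner_comm gk fm, real_inner_comm gkm1 fm, real_inner_comm u0 fm, real_inner_comm uk fm, real_inner_comm vkm1 fm, real_inner_comm gkm1 gk, real_inner_comm u0 gk, real_inner_comm uk gk, real_inner_comm vkm1 gk, real_inner_comm u0 gkm1, real_inner_comm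 uk gkm1, real_inner_comm vkm1 gkm1, real_inner_comm uk u0, real_inner_comm vkm1 u0, real_inner_comm vkm1 uk]
    field_simp
    ring
  have keyII :
      (2 * Ak / (3 * L ^ 2 * (2 + θ) * etak ^ 2)) * ‖a - f‖ ^ 2
        + (2 * Ak / (3 * L ^ 2 * (2 + θ) * etak ^ 2)) * ‖f - gk‖ ^ 2
        + (Ak * lamk / (1 - lamk)) * ‖gk‖ ^ 2
        - (Ak1 - Ak / (1 - lamk)) * ‖a‖ ^ 2
        - (Ak / (1 - lamk)) * ‖a - gk‖ ^ 2
      = (Ak / ((3 * L ^ 2 * (2 + θ) * etak ^ 2) *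
            ((1 - lamk) ^ 2 * (1 - 3 * L ^ 2 * (2 + θ) * etak ^ 2)))) *
            ‖((1 - lamk) * (1 - 3 * L ^ 2 * (2 + θ) * etak ^ 2)) • gk
              - (1 - lamk - 3 * L ^ 2 * (2 + θ) * etak ^ 2) • a‖ ^ 2
        + (Ak / (3 * L ^ 2 * (2 + θ) * etak ^ 2)) * ‖a - (2 : ℝ) • f + gk‖ ^ 2 := by
    rw [hA1, heta, hB, hA]
    simp only [← real_inner_self_eq_norm_sq]
    simp only [inner_sub_left, inner_sub_right, inner_add_left, inner_add_right,
      real_inner_smul_left, real_inner_smul_right]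
    simp only [real_inner_comm f a, real_inner_comm gk a, real_inner_comm gk f]
    generalize 3 * L ^ 2 * (2 + θ) * etak ^ 2 = m at h1mne hm0 ⊢
    have hm0' := hm0.ne'
    field_simp
    ring
  have t1 : (0 : ℝ) ≤ (Bk / lamk) * ⟪a - b, uk1 - uk⟫ :=
    mul_nonneg (div_nonneg hBk.le hlamk) Hmono
  have t2 : (0 : ℝ) ≤ (2 * Ak / (3 * L ^ 2 * (2 + θ) * etak ^ 2)) *
      (L ^ 2 * ‖uk1 - vk‖ ^ 2 - ‖a - f‖ ^ 2) :=
    mul_nonneg (div_nonneg (by linarith) hm0.le) (sub_nonneg.mpr Hlip1)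
  have t3 : (0 : ℝ) ≤ Ak * (L ^ 2 * ‖uk - vkm1‖ ^ 2 - ‖b - fm‖ ^ 2) :=
    mul_nonneg hAk.le (sub_nonneg.mpr Hlip2)
  have t4 : (0 : ℝ) ≤ (Ak / 2) * ‖b - (2 : ℝ) • fm + gkm1‖ ^ 2 :=
    mul_nonneg (by linarith) (sq_nonneg _)
  have t5 : (0 : ℝ) ≤ (Ak / 6) * ‖(3 : ℝ) • b - (2 : ℝ) • gk - gkm1‖ ^ 2 :=
    mul_nonneg (by linarith) (sq_nonneg _)
  have t6 : (0 : ℝ) ≤ (Ak / ((3 * L ^ 2 * (2 + θ) * etak ^ 2) *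
      ((1 - lamk) ^ 2 * (1 - 3 * L ^ 2 * (2 + θ) * etak ^ 2)))) *
      ‖((1 - lamk) * (1 - 3 * L ^ 2 * (2 + θ) * etak ^ 2)) • gk
        - (1 - lamk - 3 * L ^ 2 * (2 + θ) * etak ^ 2) • a‖ ^ 2 :=
    mul_nonneg (div_nonneg hAk.le
      (mul_nonneg hm0.le (mul_nonneg (sq_nonneg _) h1m.le))) (sq_nonneg _)
  have t7 : (0 : ℝ) ≤ (Ak / (3 * L ^ 2 * (2 + θ) * etak ^ 2)) *
      ‖a - (2 : ℝ) • f + gk‖ ^ 2 :=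
    mul_nonneg (div_nonneg hAk.le hm0.le) (sq_nonneg _)
  linarith [keyI, keyII, t1, t2, t3, t4, t5, t6, t7]
end
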